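/- For a finite group G and a nontrivial normal subgroup H of G, we have (ψ(H) - |H|)/|G| + o(G/H) ≤ o(G), where ψ(K) = Σ_{x∈K} o(x) and o(K) = ψ(K)/|K| is the average order. In particular, o(G/H) < o(G). -/

import Mathlib

/-- `psi G` is the sum of the orders of the elements of `G`. -/
noncomputable def psi (G : Type*) [Group G] : ℕ := ∑ᶠ x : G, orderOf x

/-- `avgO G` is the average order of the elements of `G`. -/
noncomputable def avgO (G : Type*) [Group G] : ℚ := psi G / Nat.card G

lemma psi_eq_sum (G : Type*) [Group G] [Fintype G] : psi G = ∑ x : G, orderOf x :=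
  finsum_eq_sum_of_fintype _

theorem avgO_quotient_lt {G : Type*} [Group G] [Finite G] (H : Subgroup G) [H.Normal]
    (hH : H ≠ ⊥) :
    ((psi H : ℚ) - Nat.card H) / Nat.card G + avgO (G ⧸ H) ≤ avgO G ∧
      avgO (G ⧸ H) < avgO G := by
  classical
  have _inst := Fintype.ofFinite G
  have _inst2 := Fintype.ofFinite (G ⧸ H)
  have _inst3 := Fintype.ofFinite H
  -- pointwise inequality
  have hpt : ∀ x : G, orderOf ((x : G ⧸ H)) + (if x ∈ H then orderOf x else 0)
      ≤ orderOf x + (if x ∈ H then 1 else 0) := by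
    intro x
    by_cases hx : x ∈ H
    · simp only [hx, if_true, (QuotientGroup.eq_one_iff x).2 hx, orderOf_one]
      omega
    · simp only [hx, if_false, add_zero]
      exact Nat.le_of_dvd (orderOf_pos x) (orderOf_map_dvd (QuotientGroup.mk' H) x)
  have hsum := Finset.sum_le_sum (fun x (_ : x ∈ Finset.univ) => hpt x)
  rw [Finset.sum_add_distrib, Finset.sum_add_distrib] at hsum
  have h1 : ∑ x : G, orderOf ((x : G ⧸ H)) = Nat.card H * psi (G ⧸ H) := by
    rw [← Fintype.sum_fiberwise' (fun x : G => (x : G ⧸ H)) orderOf, psi_eq_sum,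
      Finset.mul_sum]
    refine Finset.sum_congr rfl fun q _ => ?_
    rw [Finset.sum_const, smul_eq_mul]
    congr 1
    rw [Finset.card_univ, ← Nat.card_eq_fintype_card,
      Nat.card_congr (((Equiv.subtypeEquivRight (fun x => by
        simp [Set.mem_preimage, Set.mem_singleton_iff])).trans
        (QuotientGroup.preimageMkEquivSubgroupProdSet H {q}))), Nat.card_prod]
    simp
  have h2 : ∑ x : G, (if x ∈ H then orderOf x else 0) = psi H := by
    rw [← Finset.sum_filter, psi_eq_sum]
    rw [Finset.sum_subtype (p := (· ∈ H)) (Finset.univ.filter (· ∈ H)) (by simp) orderOf]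
    exact Finset.sum_congr rfl fun x _ => Subgroup.orderOf_coe x
  have h3 : ∑ x : G, (if x ∈ H then 1 else 0) = Nat.card H := by
    rw [← Finset.sum_filter, Finset.sum_const, smul_eq_mul, mul_one]
    trans @Fintype.card {x : G // x ∈ H} (Subtype.fintype _)
    · convert (Fintype.card_subtype (fun x => x ∈ H)).symm
    · exact (@Nat.card_eq_fintype_card _ (Subtype.fintype _)).symm
  rw [h1, h2, h3, ← psi_eq_sum] at hsum
  -- strictness: Nat.card H < psi H
  have hlt : Nat.card H < psi H := by
    obtain ⟨y, hy, hy1⟩ := (Subgroup.bot_or_exists_ne_one H).resolve_left hH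
    have hcard : Nat.card H = ∑ _x : H, 1 := by
      rw [Finset.sum_const, smul_eq_mul, mul_one, Finset.card_univ, Nat.card_eq_fintype_card]
    rw [hcard, psi_eq_sum]
    refine Finset.sum_lt_sum (fun i _ => Nat.one_le_iff_ne_zero.2 (orderOf_pos i).ne')
      ⟨⟨y, hy⟩, Finset.mem_univ _, ?_⟩
    have : orderOf (⟨y, hy⟩ : H) ≠ 1 := by
      simpa [orderOf_eq_one_iff] using hy1
    have := orderOf_pos (⟨y, hy⟩ : H)
    omega
  have hG0 : (0:ℚ) < Nat.card G := by exact_mod_cast Nat.card_pos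
  have hH0 : (0:ℚ) < Nat.card H := by exact_mod_cast (Nat.card_pos : 0 < Nat.card H)
  have hGQcard : (Nat.card G : ℚ) = Nat.card (G ⧸ H) * Nat.card H := by
    exact_mod_cast Subgroup.card_eq_card_quotient_mul_card_subgroup H
  have e : avgO (G ⧸ H) = (psi (G ⧸ H) : ℚ) * Nat.card H / Nat.card G := by
    rw [avgO, hGQcard, mul_div_mul_right _ _ (ne_of_gt hH0)]
  have keyQ : (Nat.card H : ℚ) * psi (G ⧸ H) + psi H ≤ psi G + Nat.card H := by
    exact_mod_cast hsum
  have first : ((psi H : ℚ) - Nat.card H) / Nat.card G + avgO (G ⧸ H) ≤ avgO G := by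
    rw [e, avgO, ← add_div]
    apply div_le_div_of_nonneg_right ?_ hG0.le
    linarith
  have hposfrac : 0 < ((psi H : ℚ) - Nat.card H) / Nat.card G := by
    apply div_pos _ hG0
    have : (Nat.card H : ℚ) < psi H := by exact_mod_cast hlt
    linarith
  exact ⟨first, by linarith⟩
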